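/- Assume that for ℓ ∈ {1,2} the measurable kernel γ_ℓ : Ω×Ω → [0,∞) satisfies condition (N) with a common constant γ∞ ≥ 1, let (u⁰,v⁰) ∈ X⁺ × X⁺, and suppose that for some δ ≥ 0 one has ‖u⁰‖∞ ≤ 1 + δ and ‖v⁰‖∞ < (f+κ)/(1+δ). Then the global solution (u,v) of (CNLGS) satisfies ‖u(t)‖∞ ≤ 1 + δ and ‖v(t)‖∞ ≤ ‖v⁰‖∞ for all t ≥ 0, and lim_{t→∞} ( ‖u(t) − 1‖∞ + ‖v(t)‖∞ ) = 0. -/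

import Mathlib

open MeasureTheory Real Set Filter
open Topology

noncomputable section

/-- The nonlocal operator `Γ_γ z(x) = ∫_Ω γ(x,y)(z(y) - z(x)) dy`. -/
def GammaOp {n : ℕ} (Ω : Set (EuclideanSpace ℝ (Fin n)))
    (γ : EuclideanSpace ℝ (Fin n) → EuclideanSpace ℝ (Fin n) → ℝ)
    (z : EuclideanSpace ℝ (Fin n) → ℝ) (x : EuclideanSpace ℝ (Fin n)) : ℝ :=
  ∫ y in Ω, γ x y * (z y - z x)

/-- Condition (N): γ is a measurable nonnegative kernel with
`∫_Ω γ(y,x) dy = ∫_Ω γ(x,y) dy ≤ γ∞` for all `x ∈ Ω`. -/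
def KernelCondN {n : ℕ} (Ω : Set (EuclideanSpace ℝ (Fin n)))
    (γ : EuclideanSpace ℝ (Fin n) → EuclideanSpace ℝ (Fin n) → ℝ) (γinf : ℝ) : Prop :=
  Measurable (Function.uncurry γ) ∧ (∀ x y, 0 ≤ γ x y) ∧
    ∀ x ∈ Ω, IntegrableOn (fun y => γ x y) Ω ∧ IntegrableOn (fun y => γ y x) Ω ∧
      (∫ y in Ω, γ y x) = (∫ y in Ω, γ x y) ∧ (∫ y in Ω, γ x y) ≤ γinf

/-- The `L∞(Ω)` norm. -/
def supN {n : ℕ} (Ω : Set (EuclideanSpace ℝ (Fin n)))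
    (z : EuclideanSpace ℝ (Fin n) → ℝ) : ℝ :=
  (eLpNormEssSup z (volume.restrict Ω)).toReal

section AuxiliaryLemmas

variable {n : ℕ} {Ω : Set (EuclideanSpace ℝ (Fin n))}

lemma supN_nonneg (z : EuclideanSpace ℝ (Fin n) → ℝ) : 0 ≤ supN Ω z :=
  ENNReal.toReal_nonneg

lemma supN_le_of_ae {z : EuclideanSpace ℝ (Fin n) → ℝ} {C : ℝ} (hC : 0 ≤ C)
    (h : ∀ᵐ x ∂(volume.restrict Ω), |z x| ≤ C) : supN Ω z ≤ C := by
  have h1 : eLpNormEssSup z (volume.restrict Ω) ≤ ENNReal.ofReal C :=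
    eLpNormEssSup_le_of_ae_bound (by simpa [Real.norm_eq_abs] using h)
  exact ENNReal.toReal_le_of_le_ofReal hC h1

lemma ae_le_supN {z : EuclideanSpace ℝ (Fin n) → ℝ} (h : MemLp z ⊤ (volume.restrict Ω)) :
    ∀ᵐ x ∂(volume.restrict Ω), |z x| ≤ supN Ω z := by
  have hfin : eLpNormEssSup z (volume.restrict Ω) ≠ ⊤ := by
    have h2 := h.2
    rw [eLpNorm_exponent_top] at h2
    exact h2.ne
  filter_upwards [ae_le_eLpNormEssSup (f := z) (μ := volume.restrict Ω)] with x hx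
  have := ENNReal.toReal_mono hfin hx
  simpa [Real.norm_eq_abs, supN] using this

-- kernel measurability
lemma kernel_meas {γ : EuclideanSpace ℝ (Fin n) → EuclideanSpace ℝ (Fin n) → ℝ} {γinf : ℝ}
    (hγ : KernelCondN Ω γ γinf) (z : EuclideanSpace ℝ (Fin n)) :
    Measurable (fun y => γ z y) := hγ.1.comp measurable_prodMk_left

lemma gamma_integrable {γ : EuclideanSpace ℝ (Fin n) → EuclideanSpace ℝ (Fin n) → ℝ} {γinf : ℝ}
    (hγ : KernelCondN Ω γ γinf) {z : EuclideanSpace ℝ (Fin n)} (hz : z ∈ Ω)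
    {w : EuclideanSpace ℝ (Fin n) → ℝ} (hw : MemLp w ⊤ (volume.restrict Ω)) :
    Integrable (fun y => γ z y * (w y - w z)) (volume.restrict Ω) := by
  set C := supN Ω w with hC
  apply Integrable.mono' (((hγ.2.2 z hz).1).const_mul (C + |w z|))
  · exact ((kernel_meas hγ z).aestronglyMeasurable.mul
      ((hw.aestronglyMeasurable.sub aestronglyMeasurable_const)))
  · filter_upwards [ae_le_supN hw] with y hy
    have h0 := hγ.2.1 z y
    have : |w y - w z| ≤ C + |w z| := by
      calc |w y - w z| ≤ |w y| + |w z| := abs_sub _ _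
        _ ≤ C + |w z| := by linarith
    calc ‖γ z y * (w y - w z)‖ = γ z y * |w y - w z| := by
          rw [Real.norm_eq_abs, abs_mul, abs_of_nonneg h0]
      _ ≤ γ z y * (C + |w z|) := by
          exact mul_le_mul_of_nonneg_left this h0
      _ = (C + |w z|) * γ z y := by ring

lemma gammaOp_le {γ : EuclideanSpace ℝ (Fin n) → EuclideanSpace ℝ (Fin n) → ℝ} {γinf : ℝ}
    (hγ : KernelCondN Ω γ γinf) (hγ0 : 0 ≤ γinf) {z : EuclideanSpace ℝ (Fin n)} (hz : z ∈ Ω)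
    {w : EuclideanSpace ℝ (Fin n) → ℝ} (hw : MemLp w ⊤ (volume.restrict Ω))
    {b : ℝ} (hb : 0 ≤ b) (hbae : ∀ᵐ y ∂(volume.restrict Ω), w y ≤ b) (hwz : 0 ≤ w z) :
    GammaOp Ω γ w z ≤ γinf * b := by
  have h1 : GammaOp Ω γ w z ≤ ∫ y in Ω, γ z y * b := by
    apply integral_mono_ae (gamma_integrable hγ hz hw) (((hγ.2.2 z hz).1).mul_const b)
    filter_upwards [hbae] with y hy
    exact mul_le_mul_of_nonneg_left (by linarith) (hγ.2.1 z y)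
  calc GammaOp Ω γ w z ≤ ∫ y in Ω, γ z y * b := h1
    _ = (∫ y in Ω, γ z y) * b := by rw [integral_mul_const]
    _ ≤ γinf * b := mul_le_mul_of_nonneg_right (hγ.2.2 z hz).2.2.2 hb

lemma gammaOp_ge {γ : EuclideanSpace ℝ (Fin n) → EuclideanSpace ℝ (Fin n) → ℝ} {γinf : ℝ}
    (hγ : KernelCondN Ω γ γinf) (hγ0 : 0 ≤ γinf) {z : EuclideanSpace ℝ (Fin n)} (hz : z ∈ Ω)
    {w : EuclideanSpace ℝ (Fin n) → ℝ} (hw : MemLp w ⊤ (volume.restrict Ω))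
    (hnn : ∀ᵐ y ∂(volume.restrict Ω), 0 ≤ w y) (hwz : 0 ≤ w z) :
    -(γinf * w z) ≤ GammaOp Ω γ w z := by
  have h1 : (∫ y in Ω, -(γ z y * w z)) ≤ GammaOp Ω γ w z := by
    apply integral_mono_ae (((hγ.2.2 z hz).1).mul_const (w z)).neg (gamma_integrable hγ hz hw)
    filter_upwards [hnn] with y hy
    have h0 := hγ.2.1 z y
    have : γ z y * (0 - w z) ≤ γ z y * (w y - w z) :=
      mul_le_mul_of_nonneg_left (by linarith) h0
    simpa using this
  calc -(γinf * w z) ≤ -((∫ y in Ω, γ z y) * w z) := by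
        apply neg_le_neg
        exact mul_le_mul_of_nonneg_right (hγ.2.2 z hz).2.2.2 hwz
    _ = ∫ y in Ω, -(γ z y * w z) := by rw [integral_neg, integral_mul_const]
    _ ≤ GammaOp Ω γ w z := h1

lemma gammaOp_abs_le {γ : EuclideanSpace ℝ (Fin n) → EuclideanSpace ℝ (Fin n) → ℝ} {γinf : ℝ}
    (hγ : KernelCondN Ω γ γinf) (hγ0 : 0 ≤ γinf) {z : EuclideanSpace ℝ (Fin n)} (hz : z ∈ Ω)
    {w : EuclideanSpace ℝ (Fin n) → ℝ} (hw : MemLp w ⊤ (volume.restrict Ω))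
    {b : ℝ} (hb : 0 ≤ b) (hbae : ∀ᵐ y ∂(volume.restrict Ω), |w y| ≤ b) :
    |GammaOp Ω γ w z| ≤ γinf * (b + |w z|) := by
  have h1 : |GammaOp Ω γ w z| ≤ ∫ y in Ω, |γ z y * (w y - w z)| := by
    simpa [Real.norm_eq_abs, GammaOp, abs_mul] using
      norm_integral_le_integral_norm (μ := volume.restrict Ω) (fun y => γ z y * (w y - w z))
  have h2 : (∫ y in Ω, |γ z y * (w y - w z)|) ≤ ∫ y in Ω, γ z y * (b + |w z|) := by
    apply integral_mono_ae (gamma_integrable hγ hz hw).abs (((hγ.2.2 z hz).1).mul_const _)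
    filter_upwards [hbae] with y hy
    have h0 := hγ.2.1 z y
    rw [abs_mul, abs_of_nonneg h0]
    apply mul_le_mul_of_nonneg_left _ h0
    calc |w y - w z| ≤ |w y| + |w z| := abs_sub _ _
      _ ≤ b + |w z| := by linarith
  calc |GammaOp Ω γ w z| ≤ ∫ y in Ω, γ z y * (b + |w z|) := h1.trans h2
    _ = (∫ y in Ω, γ z y) * (b + |w z|) := by rw [integral_mul_const]
    _ ≤ γinf * (b + |w z|) := by
        apply mul_le_mul_of_nonneg_right (hγ.2.2 z hz).2.2.2 (by positivity)

lemma gammaOp_sub_const (γ : EuclideanSpace ℝ (Fin n) → EuclideanSpace ℝ (Fin n) → ℝ)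
    (w : EuclideanSpace ℝ (Fin n) → ℝ) (c : ℝ) (z : EuclideanSpace ℝ (Fin n)) :
    GammaOp Ω γ (fun x => w x - c) z = GammaOp Ω γ w z := by
  unfold GammaOp
  congr 1
  funext y
  ring

lemma gammaOp_const_sub (γ : EuclideanSpace ℝ (Fin n) → EuclideanSpace ℝ (Fin n) → ℝ)
    (w : EuclideanSpace ℝ (Fin n) → ℝ) (c : ℝ) (z : EuclideanSpace ℝ (Fin n)) :
    GammaOp Ω γ (fun x => c - w x) z = -GammaOp Ω γ w z := by
  unfold GammaOp
  rw [← integral_neg]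
  congr 1
  funext y
  ring



/-- Comparison principle: if `f' ≤ F'` wherever `F < f`, and `f a ≤ F a`, then `f b ≤ F b`. -/
lemma comp_le {f F f' F' : ℝ → ℝ} {a b : ℝ} (hab : a ≤ b)
    (hfc : ContinuousOn f (Icc a b)) (hFc : ContinuousOn F (Icc a b))
    (hfd : ∀ r ∈ Ioo a b, HasDerivAt f (f' r) r) (hFd : ∀ r ∈ Ioo a b, HasDerivAt F (F' r) r)
    (hle : ∀ r ∈ Ioo a b, F r < f r → f' r ≤ F' r)
    (ha : f a ≤ F a) : f b ≤ F b := by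
  set S := {r ∈ Icc a b | f r ≤ F r} with hS
  have hSclosed : IsClosed S := by
    have hSeq : S = Icc a b ∩ (fun r => f r - F r) ⁻¹' (Iic 0) := by
      ext r; simp [hS, sub_nonpos, and_comm]
    rw [hSeq]
    exact (hfc.sub hFc).preimage_isClosed_of_isClosed isClosed_Icc isClosed_Iic
  have haS : a ∈ S := ⟨⟨le_rfl, hab⟩, ha⟩
  have hne : S.Nonempty := ⟨a, haS⟩
  have hbdd : BddAbove S := ⟨b, fun r hr => hr.1.2⟩
  have hcS : sSup S ∈ S := hSclosed.csSup_mem hne hbdd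
  set c := sSup S with hc
  have hca : a ≤ c := hcS.1.1
  have hcb : c ≤ b := hcS.1.2
  rcases eq_or_lt_of_le hcb with h | h
  · rw [← h]; exact hcS.2
  · have hanti : AntitoneOn (fun r => f r - F r) (Icc c b) := by
      apply antitoneOn_of_deriv_nonpos (convex_Icc c b)
      · exact (hfc.sub hFc).mono (Icc_subset_Icc hca le_rfl)
      · intro r hr
        rw [interior_Icc] at hr
        have hrO : r ∈ Ioo a b := ⟨lt_of_le_of_lt hca hr.1, hr.2⟩
        exact ((hfd r hrO).sub (hFd r hrO)).differentiableAt.differentiableWithinAt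
      · intro r hr
        rw [interior_Icc] at hr
        have hrO : r ∈ Ioo a b := ⟨lt_of_le_of_lt hca hr.1, hr.2⟩
        have hnotS : r ∉ S := by
          intro hrS
          exact absurd (le_csSup hbdd hrS) (not_le.2 hr.1)
        have hFr : F r < f r := by
          by_contra hh
          push_neg at hh
          exact hnotS ⟨⟨hrO.1.le, hrO.2.le⟩, hh⟩
        rw [(show HasDerivAt (fun r => f r - F r) (f' r - F' r) r from (hfd r hrO).sub (hFd r hrO)).deriv]
        linarith [hle r hrO hFr]
    have h1 : f b - F b ≤ f c - F c := hanti (left_mem_Icc.2 hcb) (right_mem_Icc.2 hcb) hcb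
    have h2 : f c - F c ≤ 0 := sub_nonpos.2 hcS.2
    linarith

/-- Lipschitz bound for decaying exponentials on the nonnegative axis. -/
lemma exp_lip {c : ℝ} (hc : 0 ≤ c) {s t : ℝ} (hs : 0 ≤ s) (ht : 0 ≤ t) :
    |Real.exp (-c * t) - Real.exp (-c * s)| ≤ c * |t - s| := by
  have key : ∀ x ∈ Ici (0:ℝ), HasDerivWithinAt (fun r => Real.exp (-c * r))
      (Real.exp (-c * x) * (-c)) (Ici 0) x := by
    intro x _
    simpa using (((hasDerivAt_id x).const_mul (-c)).exp).hasDerivWithinAt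
  have bound : ∀ x ∈ Ici (0:ℝ), ‖Real.exp (-c * x) * (-c)‖ ≤ c := by
    intro x hx
    rw [norm_mul, Real.norm_eq_abs, Real.norm_eq_abs, abs_neg, abs_of_nonneg hc,
      abs_of_pos (Real.exp_pos _)]
    have h1 : Real.exp (-c * x) ≤ 1 := Real.exp_le_one_iff.2 (by
      have : (0:ℝ) ≤ c * x := mul_nonneg hc hx
      linarith)
    nlinarith [Real.exp_pos (-c * x)]
  have := Convex.norm_image_sub_le_of_norm_hasDerivWithin_le key bound (convex_Ici 0) hs ht
  simpa [Real.norm_eq_abs] using this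

/-- Grönwall-type lemma: continuous nonnegative `g` with `g ≤ C ∫ g` vanishes. -/
lemma gronwall0 {g : ℝ → ℝ} {T C : ℝ} (hT : 0 ≤ T) (hC : 0 ≤ C)
    (hg : ContinuousOn g (Icc 0 T)) (hnn : ∀ s ∈ Icc (0:ℝ) T, 0 ≤ g s)
    (hineq : ∀ s ∈ Icc (0:ℝ) T, g s ≤ C * ∫ r in (0:ℝ)..s, g r) :
    ∀ s ∈ Icc (0:ℝ) T, g s = 0 := by
  set h : ℝ → ℝ := fun s => ∫ r in (0:ℝ)..s, g r with hh
  have hhc : ContinuousOn h (Icc 0 T) := by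
    have h1 : IntegrableOn g (uIcc 0 T) volume := by
      rw [uIcc_of_le hT]
      exact hg.integrableOn_Icc
    have := intervalIntegral.continuousOn_primitive_interval (a := (0:ℝ)) (b := T) h1
    rwa [uIcc_of_le hT] at this
  have hnnh : ∀ s ∈ Icc (0:ℝ) T, 0 ≤ h s := by
    intro s hs
    apply intervalIntegral.integral_nonneg hs.1
    intro r hr
    exact hnn r ⟨hr.1, hr.2.trans hs.2⟩
  intro s hs
  have hkey : h s ≤ 0 := by
    have hcc : ContinuousOn (fun r => Real.exp (-C * r) * h r) (Icc 0 s) := by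
      apply (Continuous.continuousOn (by continuity)).mul (hhc.mono (Icc_subset_Icc le_rfl hs.2))
    have hmain : Real.exp (-C * s) * h s ≤ 0 := by
      have := comp_le (f := fun r => Real.exp (-C * r) * h r) (F := fun _ => 0)
        (f' := fun r => Real.exp (-C * r) * (-C) * h r + Real.exp (-C * r) * g r)
        (F' := fun _ => 0) hs.1 hcc continuousOn_const ?_ (fun r _ => hasDerivAt_const r 0) ?_ ?_
      · simpa using this
      · -- derivative of f
        intro r hr
        have hrT : r ∈ Icc (0:ℝ) T := ⟨hr.1.le, hr.2.le.trans hs.2⟩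
        have hd1 : HasDerivAt (fun r => Real.exp (-C * r)) (Real.exp (-C * r) * (-C)) r := by
          simpa using ((hasDerivAt_id r).const_mul (-C)).exp
        have hd2 : HasDerivAt h (g r) r := by
          apply intervalIntegral.integral_hasDerivAt_right
          · exact (hg.mono (by rw [uIcc_of_le hr.1.le]; exact Icc_subset_Icc le_rfl hrT.2)).intervalIntegrable
          · have hsub : Ioo (0:ℝ) T ⊆ Icc 0 T := Ioo_subset_Icc_self
            exact ContinuousOn.stronglyMeasurableAtFilter isOpen_Ioo (hg.mono hsub) r
              ⟨hr.1, lt_of_lt_of_le hr.2 hs.2⟩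
          · exact hg.continuousAt (Icc_mem_nhds hr.1 (lt_of_lt_of_le hr.2 hs.2))
        exact hd1.mul hd2
      · -- conditional derivative bound : unconditional here
        intro r hr _
        show Real.exp (-C * r) * (-C) * h r + Real.exp (-C * r) * g r ≤ 0
        have hrT : r ∈ Icc (0:ℝ) T := ⟨hr.1.le, hr.2.le.trans hs.2⟩
        have h1 := hineq r hrT
        have h2 : (0:ℝ) < Real.exp (-C * r) := Real.exp_pos _
        have h3 : g r ≤ C * h r := h1
        nlinarith
      · simp [hh]
    nlinarith [Real.exp_pos (-C * s), hmain]
  have h1 := hineq s hs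
  have h2 := hnn s hs
  have h3 := hnnh s hs
  nlinarith


lemma ae_all_t {α : Type*} [MeasurableSpace α] {μ : Measure α} {Ω : Set α}
    (hΩm : MeasurableSet Ω) {y : ℝ → α → ℝ} {c : ℝ → ℝ}
    (hcont : ∀ z ∈ Ω, ContinuousOn (fun s => y s z) (Ici 0)) (hc : Continuous c)
    (h : ∀ t, 0 ≤ t → ∀ᵐ z ∂(μ.restrict Ω), y t z ≤ c t) :
    ∀ᵐ z ∂(μ.restrict Ω), ∀ t, 0 ≤ t → y t z ≤ c t := by
  have hQ : ∀ᵐ z ∂(μ.restrict Ω), ∀ q : ℚ, (0:ℝ) ≤ (q : ℝ) → y (q : ℝ) z ≤ c (q : ℝ) := by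
    rw [ae_all_iff]
    intro q
    by_cases hq : (0:ℝ) ≤ (q : ℝ)
    · filter_upwards [h q hq] with z hz
      intro _; exact hz
    · filter_upwards with z hz; exact absurd hz hq
  filter_upwards [hQ, ae_restrict_mem hΩm] with z hz hzΩ
  intro t ht
  have hex : ∀ m : ℕ, ∃ q : ℚ, t < (q:ℝ) ∧ (q:ℝ) < t + 1/(m+1) := by
    intro m
    apply exists_rat_btwn
    have : (0:ℝ) < 1/(m+1) := by positivity
    linarith
  choose q hq1 hq2 using hex
  have hq0 : ∀ m, (0:ℝ) ≤ (q m : ℝ) := fun m => le_of_lt (lt_of_le_of_lt ht (hq1 m))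
  have htend : Tendsto (fun m => ((q m : ℝ))) atTop (𝓝 t) := by
    have hub : Tendsto (fun m : ℕ => t + 1/(m+1:ℝ)) atTop (𝓝 t) := by
      have h1 : Tendsto (fun m : ℕ => 1/(m+1:ℝ)) atTop (𝓝 0) :=
        tendsto_one_div_add_atTop_nhds_zero_nat
      simpa using tendsto_const_nhds.add h1
    exact tendsto_of_tendsto_of_tendsto_of_le_of_le tendsto_const_nhds hub
      (fun m => (hq1 m).le) (fun m => (hq2 m).le)
  have htendW : Tendsto (fun m => ((q m : ℝ))) atTop (𝓝[Ici 0] t) :=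
    tendsto_nhdsWithin_of_tendsto_nhds_of_eventually_within _ htend
      (Eventually.of_forall fun m => hq0 m)
  have h1 : Tendsto (fun m => y ((q m : ℝ)) z) atTop (𝓝 (y t z)) :=
    ((hcont z hzΩ) t ht).tendsto.comp htendW
  have h2 : Tendsto (fun m => c ((q m : ℝ))) atTop (𝓝 (c t)) :=
    (hc.tendsto t).comp htend
  exact le_of_tendsto_of_tendsto' h1 h2 (fun m => hz (q m) (hq0 m))


/-- Master nonlocal maximum principle. -/
lemma master {n : ℕ} {Ω : Set (EuclideanSpace ℝ (Fin n))}
    {γ : EuclideanSpace ℝ (Fin n) → EuclideanSpace ℝ (Fin n) → ℝ} {γinf : ℝ}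
    (hγ : KernelCondN Ω γ γinf) (hγ0 : 0 ≤ γinf)
    {d K₂ T Λ : ℝ} (hd : 0 ≤ d) (hK₂ : 0 ≤ K₂) (hT : 0 ≤ T) (hΛ : 0 ≤ Λ)
    {w D : ℝ → EuclideanSpace ℝ (Fin n) → ℝ}
    (hmem : ∀ t ∈ Icc (0:ℝ) T, MemLp (w t) ⊤ (volume.restrict Ω))
    (hcont : ∀ z ∈ Ω, ContinuousOn (fun s => w s z) (Icc 0 T))
    (hcd : ∀ z ∈ Ω, ∀ r ∈ Ioo (0:ℝ) T, HasDerivAt (fun s => w s z) (D r z) r)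
    (hinit : ∀ᵐ z ∂(volume.restrict Ω), w 0 z ≤ 0)
    (hlip : ∀ s ∈ Icc (0:ℝ) T, ∀ t ∈ Icc (0:ℝ) T,
      ∀ᵐ z ∂(volume.restrict Ω), |w t z - w s z| ≤ Λ * |t - s|)
    (hkey : ∀ᵐ z ∂(volume.restrict Ω), z ∈ Ω ∧ ∀ r ∈ Ioo (0:ℝ) T, 0 < w r z →
        D r z ≤ d * GammaOp Ω γ (w r) z + K₂ * w r z) :
    ∀ t ∈ Icc (0:ℝ) T, ∀ᵐ z ∂(volume.restrict Ω), w t z ≤ 0 := by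
  set μ := volume.restrict Ω with hμdef
  set g : ℝ → ℝ := fun s => supN Ω (fun z => max (w s z) 0) with hgdef
  have hgnn : ∀ s, 0 ≤ g s := fun s => supN_nonneg _
  have hmemg : ∀ s ∈ Icc (0:ℝ) T, MemLp (fun z => max (w s z) 0) ⊤ μ := by
    intro s hs
    apply MemLp.of_le (hmem s hs)
    · exact ((hmem s hs).aestronglyMeasurable.aemeasurable.max
        aemeasurable_const).aestronglyMeasurable
    · filter_upwards with z
      rw [Real.norm_eq_abs, Real.norm_eq_abs, abs_of_nonneg (le_max_right _ _)]
      exact max_le (le_abs_self _) (abs_nonneg _)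
  have hgae : ∀ s ∈ Icc (0:ℝ) T, ∀ᵐ z ∂μ, w s z ≤ g s := by
    intro s hs
    filter_upwards [ae_le_supN (hmemg s hs)] with z hz
    calc w s z ≤ max (w s z) 0 := le_max_left _ _
      _ ≤ |max (w s z) 0| := le_abs_self _
      _ ≤ g s := hz
  have hglip : ∀ s ∈ Icc (0:ℝ) T, ∀ t ∈ Icc (0:ℝ) T, g t ≤ g s + Λ * |t - s| := by
    intro s hs t ht
    apply supN_le_of_ae (add_nonneg (hgnn s) (mul_nonneg hΛ (abs_nonneg _)))
    filter_upwards [hlip s hs t ht, ae_le_supN (hmemg s hs)] with z h1 h2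
    rw [abs_of_nonneg (le_max_right _ _)]
    rcases le_or_gt (w t z) 0 with hle | hlt
    · rw [max_eq_right hle]
      exact add_nonneg (hgnn s) (mul_nonneg hΛ (abs_nonneg _))
    · rw [max_eq_left hlt.le]
      have h3 : w t z - w s z ≤ Λ * |t - s| := (abs_le.1 h1).2
      have h4 : w s z ≤ |max (w s z) 0| := (le_max_left _ _).trans (le_abs_self _)
      linarith
  have hgcont : ContinuousOn g (Icc 0 T) := by
    have hL : LipschitzOnWith (Real.toNNReal Λ) g (Icc 0 T) := by
      apply LipschitzOnWith.of_dist_le_mul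
      intro x hx y hy
      rw [Real.dist_eq, Real.dist_eq, Real.coe_toNNReal Λ hΛ]
      have h1 := hglip y hy x hx
      have h2 := hglip x hx y hy
      rw [abs_le]
      constructor
      · have heq : |y - x| = |x - y| := abs_sub_comm y x
        rw [heq] at h2
        linarith
      · linarith
    exact hL.continuousOn
  intro t ht
  set K₁ := d * γinf with hK₁def
  have hK₁ : 0 ≤ K₁ := mul_nonneg hd hγ0
  set G : ℝ → ℝ := fun s => Real.exp (-K₂ * s) * g s with hGdef
  have hexpc : Continuous (fun r : ℝ => Real.exp (-K₂ * r)) :=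
    Real.continuous_exp.comp (continuous_const.mul continuous_id)
  have hGcont : ContinuousOn G (Icc 0 T) := hexpc.continuousOn.mul hgcont
  have hGnn : ∀ s, 0 ≤ G s := fun s => mul_nonneg (Real.exp_pos _).le (hgnn s)
  have claim : ∀ t' ∈ Icc (0:ℝ) T, g t' ≤ (Real.exp (K₂*T) * K₁) * ∫ s in (0:ℝ)..t', g s := by
    intro t' ht'
    have hFnn : 0 ≤ ∫ s in (0:ℝ)..t', G s :=
      intervalIntegral.integral_nonneg ht'.1 (fun s _ => hGnn s)
    have key2 : ∀ᵐ z ∂μ, w t' z ≤ Real.exp (K₂ * t') * (K₁ * ∫ s in (0:ℝ)..t', G s) := by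
      filter_upwards [hkey, hinit] with z hz hz0
      obtain ⟨hzΩ, hkz⟩ := hz
      have hcomp : Real.exp (-K₂*t') * w t' z ≤ K₁ * ∫ s in (0:ℝ)..t', G s := by
        apply comp_le (a := 0) (b := t')
          (f := fun r => Real.exp (-K₂*r) * w r z)
          (F := fun r => K₁ * ∫ s in (0:ℝ)..r, G s)
          (f' := fun r => Real.exp (-K₂*r) * (-K₂) * w r z + Real.exp (-K₂*r) * D r z)
          (F' := fun r => K₁ * G r) ht'.1
        · exact hexpc.continuousOn.mul
            ((hcont z hzΩ).mono (Icc_subset_Icc le_rfl ht'.2))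
        · have h1 : IntegrableOn G (uIcc 0 t') volume := by
            rw [uIcc_of_le ht'.1]
            exact (hGcont.mono (Icc_subset_Icc le_rfl ht'.2)).integrableOn_Icc
          have h2 := (intervalIntegral.continuousOn_primitive_interval h1)
          rw [uIcc_of_le ht'.1] at h2
          exact continuousOn_const.mul h2
        · intro r hr
          have hrT : r ∈ Ioo (0:ℝ) T := ⟨hr.1, lt_of_lt_of_le hr.2 ht'.2⟩
          have hd1 : HasDerivAt (fun r => Real.exp (-K₂ * r)) (Real.exp (-K₂*r) * (-K₂)) r := by
            simpa using ((hasDerivAt_id r).const_mul (-K₂)).exp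
          exact hd1.mul (hcd z hzΩ r hrT)
        · intro r hr
          have hrT : r ∈ Ioo (0:ℝ) T := ⟨hr.1, lt_of_lt_of_le hr.2 ht'.2⟩
          have hint : IntervalIntegrable G volume 0 r := by
            apply ContinuousOn.intervalIntegrable
            rw [uIcc_of_le hr.1.le]
            exact hGcont.mono (Icc_subset_Icc le_rfl (hr.2.le.trans ht'.2))
          have hd3 : HasDerivAt (fun u => ∫ s in (0:ℝ)..u, G s) (G r) r := by
            apply intervalIntegral.integral_hasDerivAt_right hint
            · exact ContinuousOn.stronglyMeasurableAtFilter isOpen_Ioo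
                (hGcont.mono Ioo_subset_Icc_self) r hrT
            · exact hGcont.continuousAt (Icc_mem_nhds hrT.1 hrT.2)
          exact hd3.const_mul K₁
        · intro r hr hFf
          have hrT : r ∈ Ioo (0:ℝ) T := ⟨hr.1, lt_of_lt_of_le hr.2 ht'.2⟩
          have hrIcc : r ∈ Icc (0:ℝ) T := ⟨hr.1.le, hrT.2.le⟩
          have hFnn' : 0 ≤ K₁ * ∫ s in (0:ℝ)..r, G s :=
            mul_nonneg hK₁ (intervalIntegral.integral_nonneg hr.1.le (fun s _ => hGnn s))
          have hexp := Real.exp_pos (-K₂*r)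
          have hwpos : 0 < w r z := by
            have h2 : (0:ℝ) < Real.exp (-K₂*r) * w r z := lt_of_le_of_lt hFnn' hFf
            nlinarith
          have hΓ : GammaOp Ω γ (w r) z ≤ γinf * g r :=
            gammaOp_le hγ hγ0 hzΩ (hmem r hrIcc) (hgnn r) (hgae r hrIcc) hwpos.le
          have hD := hkz r hrT hwpos
          show Real.exp (-K₂*r) * (-K₂) * w r z + Real.exp (-K₂*r) * D r z ≤ K₁ * G r
          have h5 : D r z ≤ K₁ * g r + K₂ * w r z := by
            calc D r z ≤ d * GammaOp Ω γ (w r) z + K₂ * w r z := hD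
              _ ≤ d * (γinf * g r) + K₂ * w r z := by nlinarith
              _ = K₁ * g r + K₂ * w r z := by rw [hK₁def]; ring
          have h6 : Real.exp (-K₂*r) * (-K₂) * w r z + Real.exp (-K₂*r) * D r z
              ≤ Real.exp (-K₂*r) * (K₁ * g r) := by nlinarith
          calc Real.exp (-K₂*r) * (-K₂) * w r z + Real.exp (-K₂*r) * D r z
              ≤ Real.exp (-K₂*r) * (K₁ * g r) := h6
            _ = K₁ * G r := by rw [hGdef]; ring
        · simpa using hz0
      have hcalc : Real.exp (K₂*t') * Real.exp (-K₂*t') = 1 := by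
        rw [← Real.exp_add]; ring_nf; exact Real.exp_zero
      have h6 := mul_le_mul_of_nonneg_left hcomp (Real.exp_pos (K₂*t')).le
      calc w t' z = Real.exp (K₂*t') * Real.exp (-K₂*t') * w t' z := by rw [hcalc]; ring
        _ = Real.exp (K₂*t') * (Real.exp (-K₂*t') * w t' z) := by ring
        _ ≤ Real.exp (K₂*t') * (K₁ * ∫ s in (0:ℝ)..t', G s) := h6
    have hb1 : 0 ≤ Real.exp (K₂*t') * (K₁ * ∫ s in (0:ℝ)..t', G s) :=
      mul_nonneg (Real.exp_pos _).le (mul_nonneg hK₁ hFnn)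
    have hgt' : g t' ≤ Real.exp (K₂*t') * (K₁ * ∫ s in (0:ℝ)..t', G s) := by
      apply supN_le_of_ae hb1
      filter_upwards [key2] with z hz
      rw [abs_of_nonneg (le_max_right _ _)]
      exact max_le hz hb1
    have hGg : (∫ s in (0:ℝ)..t', G s) ≤ ∫ s in (0:ℝ)..t', g s := by
      apply intervalIntegral.integral_mono_on ht'.1
      · apply ContinuousOn.intervalIntegrable
        rw [uIcc_of_le ht'.1]
        exact hGcont.mono (Icc_subset_Icc le_rfl ht'.2)
      · apply ContinuousOn.intervalIntegrable
        rw [uIcc_of_le ht'.1]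
        exact hgcont.mono (Icc_subset_Icc le_rfl ht'.2)
      · intro s hs
        have h7 : Real.exp (-K₂*s) ≤ 1 := by
          rw [Real.exp_le_one_iff]
          nlinarith [hs.1]
        have h8 := hgnn s
        show Real.exp (-K₂*s) * g s ≤ g s
        nlinarith
    have hintg_nn : 0 ≤ ∫ s in (0:ℝ)..t', g s :=
      intervalIntegral.integral_nonneg ht'.1 (fun s _ => hgnn s)
    have hexple : Real.exp (K₂*t') ≤ Real.exp (K₂*T) := by
      apply Real.exp_le_exp.2
      nlinarith [ht'.2]
    calc g t' ≤ Real.exp (K₂*t') * (K₁ * ∫ s in (0:ℝ)..t', G s) := hgt'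
      _ ≤ Real.exp (K₂*t') * (K₁ * ∫ s in (0:ℝ)..t', g s) :=
          mul_le_mul_of_nonneg_left (mul_le_mul_of_nonneg_left hGg hK₁) (Real.exp_pos _).le
      _ ≤ Real.exp (K₂*T) * (K₁ * ∫ s in (0:ℝ)..t', g s) :=
          mul_le_mul_of_nonneg_right hexple (mul_nonneg hK₁ hintg_nn)
      _ = (Real.exp (K₂*T) * K₁) * ∫ s in (0:ℝ)..t', g s := by ring
  have hzero := gronwall0 hT (mul_nonneg (Real.exp_pos _).le hK₁) hgcont
    (fun s _ => hgnn s) claim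
  filter_upwards [hgae t ht] with z hz
  have h9 := hzero t ht
  linarith

end AuxiliaryLemmas

/-- `(u,v)` is a (C¹ in time, L∞ in space) solution of the nonlocal Gray-Scott system
(CNLGS) with kernels `γ₁, γ₂` and initial data `(u0, v0)`. -/
def IsGSSol {n : ℕ} (Ω : Set (EuclideanSpace ℝ (Fin n))) (d₁ d₂ f κ : ℝ)
    (γ₁ γ₂ : EuclideanSpace ℝ (Fin n) → EuclideanSpace ℝ (Fin n) → ℝ)
    (u0 v0 : EuclideanSpace ℝ (Fin n) → ℝ)
    (u v : ℝ → EuclideanSpace ℝ (Fin n) → ℝ) : Prop :=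
  (∀ t, 0 ≤ t → MemLp (u t) ⊤ (volume.restrict Ω) ∧ MemLp (v t) ⊤ (volume.restrict Ω)) ∧
  (∀ x ∈ Ω, u 0 x = u0 x ∧ v 0 x = v0 x) ∧
  (∀ x ∈ Ω, ∀ t, 0 ≤ t →
    HasDerivWithinAt (fun s => u s x)
      (d₁ * GammaOp Ω γ₁ (u t) x - u t x * (v t x) ^ 2 + f * (1 - u t x)) (Ici 0) t ∧
    HasDerivWithinAt (fun s => v s x)
      (d₂ * GammaOp Ω γ₂ (v t) x + u t x * (v t x) ^ 2 - (f + κ) * v t x) (Ici 0) t)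

/-- A time-dependent function is nonnegative a.e. in `Ω` at each time `t ≥ 0`. -/
def NonnegSol {n : ℕ} (Ω : Set (EuclideanSpace ℝ (Fin n)))
    (w : ℝ → EuclideanSpace ℝ (Fin n) → ℝ) : Prop :=
  ∀ t, 0 ≤ t → ∀ᵐ x ∂(volume.restrict Ω), 0 ≤ w t x

set_option maxHeartbeats 0 in
/-- Theorem 1.2, stabilization: under the smallness condition (1.10) on
the initial data, the solution stays in the corresponding invariant region and converges
to the semi-trivial steady state `(1,0)` in `X²`. -/
theorem statement6
    (n : ℕ) (hn : 1 ≤ n)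
    (Ω : Set (EuclideanSpace ℝ (Fin n)))
    (hΩopen : IsOpen Ω) (hΩconn : IsConnected Ω) (hΩbdd : Bornology.IsBounded Ω)
    (d₁ d₂ f κ : ℝ) (hd₁ : 0 < d₁) (hd₂ : 0 < d₂) (hf : 0 < f) (hκ : 0 < κ)
    (γ₁ γ₂ : EuclideanSpace ℝ (Fin n) → EuclideanSpace ℝ (Fin n) → ℝ)
    (γinf : ℝ) (hγinf : 1 ≤ γinf)
    (hγ₁ : KernelCondN Ω γ₁ γinf) (hγ₂ : KernelCondN Ω γ₂ γinf)
    (u0 v0 : EuclideanSpace ℝ (Fin n) → ℝ)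
    (hu0 : MemLp u0 ⊤ (volume.restrict Ω)) (hv0 : MemLp v0 ⊤ (volume.restrict Ω))
    (hu0pos : ∀ᵐ x ∂(volume.restrict Ω), 0 ≤ u0 x)
    (hv0pos : ∀ᵐ x ∂(volume.restrict Ω), 0 ≤ v0 x)
    (u v : ℝ → EuclideanSpace ℝ (Fin n) → ℝ)
    (hsol : IsGSSol Ω d₁ d₂ f κ γ₁ γ₂ u0 v0 u v)
    (hupos : NonnegSol Ω u) (hvpos : NonnegSol Ω v)
    (δ : ℝ) (hδ : 0 ≤ δ)
    (hu0small : supN Ω u0 ≤ 1 + δ) (hv0small : supN Ω v0 < (f + κ) / (1 + δ)) :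
    (∀ t, 0 ≤ t → supN Ω (u t) ≤ 1 + δ ∧ supN Ω (v t) ≤ supN Ω v0) ∧
    Filter.Tendsto (fun t => supN Ω (fun y => u t y - 1) + supN Ω (v t))
      Filter.atTop (nhds 0) := by
  obtain ⟨hmemuv, hinit0, hode⟩ := hsol
  have hΩm : MeasurableSet Ω := hΩopen.measurableSet
  have hγinf0 : (0:ℝ) ≤ γinf := le_trans zero_le_one hγinf
  have h1δ : (0:ℝ) < 1 + δ := by linarith
  set V₀ := supN Ω v0 with hV₀def
  have hV₀ : 0 ≤ V₀ := supN_nonneg _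
  have hsmall : (1+δ) * V₀ < f + κ := by
    rw [lt_div_iff₀ h1δ] at hv0small
    linarith
  set c : ℝ := min (f + κ - (1+δ)*V₀) (f/4) with hcdef
  have hc : 0 < c := lt_min (by linarith) (by positivity)
  have hcc₀ : c ≤ f + κ - (1+δ)*V₀ := min_le_left _ _
  have h2cf : 2*c ≤ f/2 := by
    have := min_le_right (f + κ - (1+δ)*V₀) (f/4); linarith
  -- continuity of trajectories
  have hcu : ∀ z ∈ Ω, ContinuousOn (fun s => u s z) (Ici 0) := by
    intro z hz r hr
    exact ((hode z hz r hr).1).continuousWithinAt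
  have hcv : ∀ z ∈ Ω, ContinuousOn (fun s => v s z) (Ici 0) := by
    intro z hz r hr
    exact ((hode z hz r hr).2).continuousWithinAt
  -- nonnegativity for all times, a.e. z
  have hEuv : ∀ᵐ z ∂(volume.restrict Ω), ∀ t, 0 ≤ t → 0 ≤ u t z ∧ 0 ≤ v t z := by
    have h1 : ∀ᵐ z ∂(volume.restrict Ω), ∀ t, 0 ≤ t → -(u t z) ≤ 0 := by
      apply ae_all_t hΩm (fun z hz => (hcu z hz).neg) continuous_const
      intro t ht
      filter_upwards [hupos t ht] with z hz
      exact neg_nonpos.2 hz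
    have h2 : ∀ᵐ z ∂(volume.restrict Ω), ∀ t, 0 ≤ t → -(v t z) ≤ 0 := by
      apply ae_all_t hΩm (fun z hz => (hcv z hz).neg) continuous_const
      intro t ht
      filter_upwards [hvpos t ht] with z hz
      exact neg_nonpos.2 hz
    filter_upwards [h1, h2] with z hz1 hz2 t ht
    exact ⟨by linarith [hz1 t ht], by linarith [hz2 t ht]⟩
  -- a priori bounds and Lipschitz estimates on [0,T]
  have apriori : ∀ T, 0 ≤ T → ∃ U V Λu Λv : ℝ, 0 ≤ U ∧ 0 ≤ V ∧ 0 ≤ Λu ∧ 0 ≤ Λv ∧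
      (∀ᵐ z ∂(volume.restrict Ω), z ∈ Ω ∧
        (∀ t ∈ Icc (0:ℝ) T, 0 ≤ u t z ∧ u t z ≤ U ∧ 0 ≤ v t z ∧ v t z ≤ V)) ∧
      (∀ᵐ z ∂(volume.restrict Ω), ∀ s ∈ Icc (0:ℝ) T, ∀ t ∈ Icc (0:ℝ) T,
        |u t z - u s z| ≤ Λu * |t - s| ∧ |v t z - v s z| ≤ Λv * |t - s|) := by
    intro T hT
    set Wu := supN Ω (u T) with hWudef
    set Wv := supN Ω (v T) with hWvdef
    have hWu : 0 ≤ Wu := supN_nonneg _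
    have hWv : 0 ≤ Wv := supN_nonneg _
    set C₂ : ℝ := d₂*γinf + (f + κ) with hC₂def
    have hC₂0 : 0 ≤ C₂ := by positivity
    set V : ℝ := Real.exp (C₂*T) * Wv with hVdef
    have hV0 : 0 ≤ V := mul_nonneg (Real.exp_pos _).le hWv
    set C₁ : ℝ := d₁*γinf + f + V^2 with hC₁def
    have hC₁0 : 0 ≤ C₁ := by positivity
    set U : ℝ := Real.exp (C₁*T) * Wu with hUdef
    have hU0 : 0 ≤ U := mul_nonneg (Real.exp_pos _).le hWu
    have hbd : ∀ᵐ z ∂(volume.restrict Ω), z ∈ Ω ∧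
        ∀ t ∈ Icc (0:ℝ) T, 0 ≤ u t z ∧ u t z ≤ U ∧ 0 ≤ v t z ∧ v t z ≤ V := by
      filter_upwards [hEuv, ae_le_supN ((hmemuv T hT).1), ae_le_supN ((hmemuv T hT).2),
        ae_restrict_mem hΩm] with z hnn huT hvT hzΩ
      refine ⟨hzΩ, ?_⟩
      have hvband : ∀ t ∈ Icc (0:ℝ) T, v t z ≤ V := by
        have hmono : MonotoneOn (fun s => Real.exp (C₂*s) * v s z) (Icc 0 T) := by
          apply monotoneOn_of_deriv_nonneg (convex_Icc 0 T)
          · exact (Real.continuous_exp.comp (continuous_const.mul continuous_id)).continuousOn.mul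
              ((hcv z hzΩ).mono (Icc_subset_Ici_self))
          · intro r hr
            rw [interior_Icc] at hr
            have hd1 : HasDerivAt (fun s => Real.exp (C₂*s)) (Real.exp (C₂*r) * C₂) r := by
              simpa using ((hasDerivAt_id r).const_mul C₂).exp
            have hd2 : HasDerivAt (fun s => v s z)
                (d₂ * GammaOp Ω γ₂ (v r) z + u r z * (v r z) ^ 2 - (f + κ) * v r z) r :=
              ((hode z hzΩ r hr.1.le).2).hasDerivAt (Ici_mem_nhds hr.1)
            exact (hd1.mul hd2).differentiableAt.differentiableWithinAt
          · intro r hr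
            rw [interior_Icc] at hr
            have hr0 : (0:ℝ) ≤ r := hr.1.le
            have hd1 : HasDerivAt (fun s => Real.exp (C₂*s)) (Real.exp (C₂*r) * C₂) r := by
              simpa using ((hasDerivAt_id r).const_mul C₂).exp
            have hd2 : HasDerivAt (fun s => v s z)
                (d₂ * GammaOp Ω γ₂ (v r) z + u r z * (v r z) ^ 2 - (f + κ) * v r z) r :=
              ((hode z hzΩ r hr0).2).hasDerivAt (Ici_mem_nhds hr.1)
            rw [(show HasDerivAt (fun s => Real.exp (C₂*s) * v s z) _ r from hd1.mul hd2).deriv]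
            have hΓ : -(γinf * v r z) ≤ GammaOp Ω γ₂ (v r) z :=
              gammaOp_ge hγ₂ hγinf0 hzΩ ((hmemuv r hr0).2) (hvpos r hr0) (hnn r hr0).2
            have h2 : 0 ≤ u r z * (v r z)^2 := mul_nonneg (hnn r hr0).1 (sq_nonneg _)
            have h3 : d₂ * (-(γinf * v r z)) ≤ d₂ * GammaOp Ω γ₂ (v r) z :=
              mul_le_mul_of_nonneg_left hΓ hd₂.le
            have h8 : C₂ * v r z = d₂*(γinf * v r z) + (f+κ)*(v r z) := by
              rw [hC₂def]; ring
            have hkey2 : 0 ≤ C₂ * v r z +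
                (d₂ * GammaOp Ω γ₂ (v r) z + u r z * (v r z)^2 - (f+κ)*(v r z)) := by
              nlinarith [h3, h2, h8]
            have h9 := mul_nonneg (Real.exp_pos (C₂*r)).le hkey2
            nlinarith [h9]
        intro t htI
        have h3 := hmono htI (right_mem_Icc.2 hT) htI.2
        have h4 : 1 ≤ Real.exp (C₂*t) := Real.one_le_exp (mul_nonneg hC₂0 htI.1)
        have h5 : v T z ≤ Wv := le_trans (le_abs_self _) hvT
        have h6 : v t z ≤ Real.exp (C₂*t) * v t z :=
          le_mul_of_one_le_left (hnn t htI.1).2 h4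
        have h7 : Real.exp (C₂*T) * v T z ≤ Real.exp (C₂*T) * Wv :=
          mul_le_mul_of_nonneg_left h5 (Real.exp_pos _).le
        rw [hVdef]
        calc v t z ≤ Real.exp (C₂*t) * v t z := h6
          _ ≤ Real.exp (C₂*T) * v T z := h3
          _ ≤ Real.exp (C₂*T) * Wv := h7
      have huband : ∀ t ∈ Icc (0:ℝ) T, u t z ≤ U := by
        have hmono : MonotoneOn (fun s => Real.exp (C₁*s) * u s z) (Icc 0 T) := by
          apply monotoneOn_of_deriv_nonneg (convex_Icc 0 T)
          · exact (Real.continuous_exp.comp (continuous_const.mul continuous_id)).continuousOn.mul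
              ((hcu z hzΩ).mono (Icc_subset_Ici_self))
          · intro r hr
            rw [interior_Icc] at hr
            have hd1 : HasDerivAt (fun s => Real.exp (C₁*s)) (Real.exp (C₁*r) * C₁) r := by
              simpa using ((hasDerivAt_id r).const_mul C₁).exp
            have hd2 : HasDerivAt (fun s => u s z)
                (d₁ * GammaOp Ω γ₁ (u r) z - u r z * (v r z) ^ 2 + f * (1 - u r z)) r :=
              ((hode z hzΩ r hr.1.le).1).hasDerivAt (Ici_mem_nhds hr.1)
            exact (hd1.mul hd2).differentiableAt.differentiableWithinAt
          · intro r hr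
            rw [interior_Icc] at hr
            have hr0 : (0:ℝ) ≤ r := hr.1.le
            have hd1 : HasDerivAt (fun s => Real.exp (C₁*s)) (Real.exp (C₁*r) * C₁) r := by
              simpa using ((hasDerivAt_id r).const_mul C₁).exp
            have hd2 : HasDerivAt (fun s => u s z)
                (d₁ * GammaOp Ω γ₁ (u r) z - u r z * (v r z) ^ 2 + f * (1 - u r z)) r :=
              ((hode z hzΩ r hr0).1).hasDerivAt (Ici_mem_nhds hr.1)
            rw [(show HasDerivAt (fun s => Real.exp (C₁*s) * u s z) _ r from hd1.mul hd2).deriv]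
            have hΓ : -(γinf * u r z) ≤ GammaOp Ω γ₁ (u r) z :=
              gammaOp_ge hγ₁ hγinf0 hzΩ ((hmemuv r hr0).1) (hupos r hr0) (hnn r hr0).1
            have h3 : d₁ * (-(γinf * u r z)) ≤ d₁ * GammaOp Ω γ₁ (u r) z :=
              mul_le_mul_of_nonneg_left hΓ hd₁.le
            have hvb := hvband r ⟨hr0, hr.2.le⟩
            have hvnn := (hnn r hr0).2
            have hunn := (hnn r hr0).1
            have hsq : (v r z)^2 ≤ V^2 := by nlinarith
            have h5 : u r z * (v r z)^2 ≤ u r z * V^2 :=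
              mul_le_mul_of_nonneg_left hsq hunn
            have h8 : C₁ * u r z = d₁*(γinf * u r z) + f*(u r z) + V^2*(u r z) := by
              rw [hC₁def]; ring
            have h10 : f * (1 - u r z) = f - f*(u r z) := by ring
            have hkey2 : 0 ≤ C₁ * u r z +
                (d₁ * GammaOp Ω γ₁ (u r) z - u r z * (v r z)^2 + f*(1 - u r z)) := by
              nlinarith [h3, h5, h8, h10, hf.le]
            have h9 := mul_nonneg (Real.exp_pos (C₁*r)).le hkey2
            nlinarith [h9]
        intro t htI
        have h3 := hmono htI (right_mem_Icc.2 hT) htI.2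
        have h4 : 1 ≤ Real.exp (C₁*t) := Real.one_le_exp (mul_nonneg hC₁0 htI.1)
        have h5 : u T z ≤ Wu := le_trans (le_abs_self _) huT
        have h6 : u t z ≤ Real.exp (C₁*t) * u t z :=
          le_mul_of_one_le_left (hnn t htI.1).1 h4
        have h7 : Real.exp (C₁*T) * u T z ≤ Real.exp (C₁*T) * Wu :=
          mul_le_mul_of_nonneg_left h5 (Real.exp_pos _).le
        rw [hUdef]
        calc u t z ≤ Real.exp (C₁*t) * u t z := h6
          _ ≤ Real.exp (C₁*T) * u T z := h3
          _ ≤ Real.exp (C₁*T) * Wu := h7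
      intro t htI
      exact ⟨(hnn t htI.1).1, huband t htI, (hnn t htI.1).2, hvband t htI⟩
    -- global ae bounds usable inside Γ
    have haeU : ∀ r ∈ Icc (0:ℝ) T, ∀ᵐ y ∂(volume.restrict Ω), |u r y| ≤ U := by
      intro r hr
      filter_upwards [hbd] with y hy
      have h1 := (hy.2 r hr)
      rw [abs_of_nonneg h1.1]
      exact h1.2.1
    have haeV : ∀ r ∈ Icc (0:ℝ) T, ∀ᵐ y ∂(volume.restrict Ω), |v r y| ≤ V := by
      intro r hr
      filter_upwards [hbd] with y hy
      have h1 := (hy.2 r hr)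
      rw [abs_of_nonneg h1.2.2.1]
      exact h1.2.2.2
    refine ⟨U, V, d₁*γinf*(U + U) + U*V^2 + f*(1+U),
      d₂*γinf*(V + V) + U*V^2 + (f+κ)*V, hU0, hV0, by positivity, by positivity, hbd, ?_⟩
    filter_upwards [hbd] with z hz
    obtain ⟨hzΩ, hb⟩ := hz
    intro s hs t ht2
    constructor
    · -- u Lipschitz
      have key : ∀ x ∈ Icc (0:ℝ) T, HasDerivWithinAt (fun s => u s z)
          (d₁ * GammaOp Ω γ₁ (u x) z - u x z * (v x z) ^ 2 + f * (1 - u x z)) (Icc 0 T) x :=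
        fun x hx => ((hode z hzΩ x hx.1).1).mono Icc_subset_Ici_self
      have bound : ∀ x ∈ Icc (0:ℝ) T,
          ‖d₁ * GammaOp Ω γ₁ (u x) z - u x z * (v x z) ^ 2 + f * (1 - u x z)‖
            ≤ d₁*γinf*(U + U) + U*V^2 + f*(1+U) := by
        intro x hx
        have hΓ : |GammaOp Ω γ₁ (u x) z| ≤ γinf * (U + |u x z|) :=
          gammaOp_abs_le hγ₁ hγinf0 hzΩ ((hmemuv x hx.1).1) hU0 (haeU x hx)
        have hbz := hb x hx
        have h1 : |u x z| ≤ U := by rw [abs_of_nonneg hbz.1]; exact hbz.2.1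
        have h2 : |u x z * (v x z)^2| ≤ U*V^2 := by
          rw [abs_mul, abs_of_nonneg (sq_nonneg (v x z))]
          have h3 : (v x z)^2 ≤ V^2 := by nlinarith [hbz.2.2.1, hbz.2.2.2]
          nlinarith [abs_nonneg (u x z), sq_nonneg (v x z)]
        have h4 : |f * (1 - u x z)| ≤ f*(1+U) := by
          rw [abs_mul, abs_of_nonneg hf.le]
          have h5 : |1 - u x z| ≤ 1 + U := by
            rw [abs_le]
            constructor <;> [linarith [hbz.2.1]; linarith [hbz.1]]
          nlinarith
        have h6 : |d₁ * GammaOp Ω γ₁ (u x) z| ≤ d₁*γinf*(U+U) := by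
          rw [abs_mul, abs_of_nonneg hd₁.le]
          have h7 : γinf * (U + |u x z|) ≤ γinf*(U+U) := by nlinarith
          nlinarith [abs_nonneg (GammaOp Ω γ₁ (u x) z)]
        rw [Real.norm_eq_abs]
        calc |d₁ * GammaOp Ω γ₁ (u x) z - u x z * (v x z) ^ 2 + f * (1 - u x z)|
            ≤ |d₁ * GammaOp Ω γ₁ (u x) z - u x z * (v x z) ^ 2| + |f * (1 - u x z)| :=
              abs_add_le _ _
          _ ≤ |d₁ * GammaOp Ω γ₁ (u x) z| + |u x z * (v x z) ^ 2| + |f * (1 - u x z)| := by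
              linarith [abs_sub (d₁ * GammaOp Ω γ₁ (u x) z) (u x z * (v x z) ^ 2)]
          _ ≤ d₁*γinf*(U + U) + U*V^2 + f*(1+U) := by linarith
      have := Convex.norm_image_sub_le_of_norm_hasDerivWithin_le key bound
        (convex_Icc 0 T) hs ht2
      simpa [Real.norm_eq_abs] using this
    · -- v Lipschitz
      have key : ∀ x ∈ Icc (0:ℝ) T, HasDerivWithinAt (fun s => v s z)
          (d₂ * GammaOp Ω γ₂ (v x) z + u x z * (v x z) ^ 2 - (f + κ) * v x z) (Icc 0 T) x :=
        fun x hx => ((hode z hzΩ x hx.1).2).mono Icc_subset_Ici_self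
      have bound : ∀ x ∈ Icc (0:ℝ) T,
          ‖d₂ * GammaOp Ω γ₂ (v x) z + u x z * (v x z) ^ 2 - (f + κ) * v x z‖
            ≤ d₂*γinf*(V + V) + U*V^2 + (f+κ)*V := by
        intro x hx
        have hΓ : |GammaOp Ω γ₂ (v x) z| ≤ γinf * (V + |v x z|) :=
          gammaOp_abs_le hγ₂ hγinf0 hzΩ ((hmemuv x hx.1).2) hV0 (haeV x hx)
        have hbz := hb x hx
        have h1 : |v x z| ≤ V := by rw [abs_of_nonneg hbz.2.2.1]; exact hbz.2.2.2
        have h2 : |u x z * (v x z)^2| ≤ U*V^2 := by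
          rw [abs_mul, abs_of_nonneg (sq_nonneg (v x z))]
          have h3 : (v x z)^2 ≤ V^2 := by nlinarith [hbz.2.2.1, hbz.2.2.2]
          have h8 : |u x z| ≤ U := by rw [abs_of_nonneg hbz.1]; exact hbz.2.1
          nlinarith [abs_nonneg (u x z), sq_nonneg (v x z)]
        have h4 : |(f+κ) * v x z| ≤ (f+κ)*V := by
          rw [abs_mul, abs_of_nonneg (by linarith : (0:ℝ) ≤ f + κ)]
          nlinarith [abs_nonneg (v x z)]
        have h6 : |d₂ * GammaOp Ω γ₂ (v x) z| ≤ d₂*γinf*(V+V) := by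
          rw [abs_mul, abs_of_nonneg hd₂.le]
          have h7 : γinf * (V + |v x z|) ≤ γinf*(V+V) := by nlinarith
          nlinarith [abs_nonneg (GammaOp Ω γ₂ (v x) z)]
        rw [Real.norm_eq_abs]
        calc |d₂ * GammaOp Ω γ₂ (v x) z + u x z * (v x z) ^ 2 - (f + κ) * v x z|
            ≤ |d₂ * GammaOp Ω γ₂ (v x) z + u x z * (v x z) ^ 2| + |(f + κ) * v x z| :=
              abs_sub _ _
          _ ≤ |d₂ * GammaOp Ω γ₂ (v x) z| + |u x z * (v x z) ^ 2| + |(f + κ) * v x z| := by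
              linarith [abs_add_le (d₂ * GammaOp Ω γ₂ (v x) z) (u x z * (v x z) ^ 2)]
          _ ≤ d₂*γinf*(V + V) + U*V^2 + (f+κ)*V := by linarith
      have := Convex.norm_image_sub_le_of_norm_hasDerivWithin_le key bound
        (convex_Icc 0 T) hs ht2
      simpa [Real.norm_eq_abs] using this
    -- Instance (A): invariance u ≤ 1 + δ
  have instA : ∀ T, 0 ≤ T → ∀ᵐ z ∂(volume.restrict Ω), u T z ≤ 1 + δ := by
    intro T hT
    obtain ⟨U, V, Λu, Λv, hU0, hV0, hΛu0, hΛv0, hbd, hlips⟩ := apriori T hT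
    have hmas : ∀ t ∈ Icc (0:ℝ) T, ∀ᵐ z ∂(volume.restrict Ω), u t z - (1+δ) ≤ 0 := by
      apply master hγ₁ hγinf0 hd₁.le le_rfl hT hΛu0
        (w := fun t z => u t z - (1+δ))
        (D := fun t z => d₁ * GammaOp Ω γ₁ (u t) z - u t z * (v t z)^2 + f*(1 - u t z))
      · intro t ht0
        exact ((hmemuv t ht0.1).1).sub (memLp_top_const _)
      · intro z hz
        exact ((hcu z hz).mono Icc_subset_Ici_self).sub continuousOn_const
      · intro z hz r hr
        exact (((hode z hz r hr.1.le).1).hasDerivAt (Ici_mem_nhds hr.1)).sub_const _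
      · filter_upwards [ae_le_supN hu0, ae_restrict_mem hΩm] with z h1 h2
        show u 0 z - (1+δ) ≤ 0
        rw [(hinit0 z h2).1]
        have h3 : u0 z ≤ supN Ω u0 := le_trans (le_abs_self _) h1
        linarith
      · intro s hs t ht2
        filter_upwards [hlips] with z hz
        have h1 := (hz s hs t ht2).1
        show |(u t z - (1+δ)) - (u s z - (1+δ))| ≤ Λu * |t - s|
        simpa using h1
      · filter_upwards [hbd] with z hz
        obtain ⟨hzΩ, hb⟩ := hz
        refine ⟨hzΩ, fun r hr hpos => ?_⟩
        have hpos' : 0 < u r z - (1+δ) := hpos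
        have hΓeq : GammaOp Ω γ₁ (fun x => u r x - (1+δ)) z = GammaOp Ω γ₁ (u r) z :=
          gammaOp_sub_const γ₁ (u r) (1+δ) z
        show d₁ * GammaOp Ω γ₁ (u r) z - u r z * (v r z)^2 + f*(1 - u r z)
            ≤ d₁ * GammaOp Ω γ₁ (fun x => u r x - (1+δ)) z + 0 * (u r z - (1+δ))
        rw [hΓeq]
        have hu0' : (0:ℝ) ≤ u r z := by linarith
        nlinarith [sq_nonneg (v r z), mul_nonneg hu0' (sq_nonneg (v r z)), hf.le, hδ]
    have := hmas T (right_mem_Icc.2 hT)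
    filter_upwards [this] with z hz
    linarith
  have hEA : ∀ᵐ z ∂(volume.restrict Ω), ∀ t, 0 ≤ t → u t z ≤ 1 + δ :=
    ae_all_t hΩm (c := fun _ => 1 + δ) hcu continuous_const instA
  -- Instance (a) : exponential decay of v below V₀ e^{-ct}
  have instVa : ∀ T, 0 ≤ T → ∀ᵐ z ∂(volume.restrict Ω), v T z ≤ V₀ * Real.exp (-c*T) := by
    intro T hT
    obtain ⟨U, V, Λu, Λv, hU0, hV0, hΛu0, hΛv0, hbd, hlips⟩ := apriori T hT
    have hK₂0 : (0:ℝ) ≤ (1+δ)*V := mul_nonneg h1δ.le hV0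
    have hΛ0 : (0:ℝ) ≤ Λv + V₀*c := by positivity
    have hmas : ∀ t ∈ Icc (0:ℝ) T, ∀ᵐ z ∂(volume.restrict Ω),
        v t z - V₀ * Real.exp (-c*t) ≤ 0 := by
      apply master hγ₂ hγinf0 hd₂.le hK₂0 hT hΛ0
        (w := fun t z => v t z - V₀ * Real.exp (-c*t))
        (D := fun t z => (d₂ * GammaOp Ω γ₂ (v t) z + u t z * (v t z)^2 - (f+κ)*v t z)
          - V₀ * (Real.exp (-c*t) * (-c)))
      · intro t ht0
        exact ((hmemuv t ht0.1).2).sub (memLp_top_const _)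
      · intro z hz
        exact ((hcv z hz).mono Icc_subset_Ici_self).sub
          (continuous_const.mul (Real.continuous_exp.comp
            (continuous_const.mul continuous_id))).continuousOn
      · intro z hz r hr
        have hB : HasDerivAt (fun s => V₀ * Real.exp (-c*s)) (V₀ * (Real.exp (-c*r) * (-c))) r := by
          simpa using ((((hasDerivAt_id r).const_mul (-c)).exp).const_mul V₀)
        exact (((hode z hz r hr.1.le).2).hasDerivAt (Ici_mem_nhds hr.1)).sub hB
      · filter_upwards [ae_le_supN hv0, ae_restrict_mem hΩm] with z h1 h2
        show v 0 z - V₀ * Real.exp (-c*0) ≤ 0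
        rw [(hinit0 z h2).2]
        have h3 : v0 z ≤ V₀ := le_trans (le_abs_self _) h1
        simp only [mul_zero, neg_zero, Real.exp_zero, mul_one]
        linarith
      · intro s hs t ht2
        filter_upwards [hlips] with z hz
        have h1 := (hz s hs t ht2).2
        have h2 := exp_lip hc.le hs.1 ht2.1
        show |(v t z - V₀*Real.exp (-c*t)) - (v s z - V₀*Real.exp (-c*s))| ≤ (Λv + V₀*c)*|t-s|
        have h3 : (v t z - V₀*Real.exp (-c*t)) - (v s z - V₀*Real.exp (-c*s))
            = (v t z - v s z) - V₀*(Real.exp (-c*t) - Real.exp (-c*s)) := by ring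
        rw [h3]
        calc |(v t z - v s z) - V₀*(Real.exp (-c*t) - Real.exp (-c*s))|
            ≤ |v t z - v s z| + |V₀*(Real.exp (-c*t) - Real.exp (-c*s))| := abs_sub _ _
          _ ≤ Λv*|t-s| + V₀*(c*|t-s|) := by
              rw [abs_mul, abs_of_nonneg hV₀]
              have h4 := mul_le_mul_of_nonneg_left h2 hV₀
              linarith
          _ = (Λv + V₀*c)*|t-s| := by ring
      · filter_upwards [hbd, hEA] with z hz hu1
        obtain ⟨hzΩ, hb⟩ := hz
        refine ⟨hzΩ, fun r hr hpos => ?_⟩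
        have hr0 : (0:ℝ) ≤ r := hr.1.le
        have hrI : r ∈ Icc (0:ℝ) T := ⟨hr0, hr.2.le⟩
        have hbz := hb r hrI
        have hpos' : 0 < v r z - V₀*Real.exp (-c*r) := hpos
        have hΓeq : GammaOp Ω γ₂ (fun x => v r x - V₀*Real.exp (-c*r)) z
            = GammaOp Ω γ₂ (v r) z := gammaOp_sub_const γ₂ (v r) _ z
        show (d₂ * GammaOp Ω γ₂ (v r) z + u r z * (v r z)^2 - (f+κ)*v r z)
              - V₀ * (Real.exp (-c*r) * (-c))
            ≤ d₂ * GammaOp Ω γ₂ (fun x => v r x - V₀*Real.exp (-c*r)) z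
              + ((1+δ)*V) * (v r z - V₀*Real.exp (-c*r))
        rw [hΓeq]
        have hB0 : (0:ℝ) ≤ V₀*Real.exp (-c*r) := mul_nonneg hV₀ (Real.exp_pos _).le
        have hBV₀ : V₀*Real.exp (-c*r) ≤ V₀ := by
          have h1 : Real.exp (-c*r) ≤ 1 := by
            rw [Real.exp_le_one_iff]
            nlinarith [hc.le]
          nlinarith
        have ha4 := hu1 r hr0
        have ha3 := hbz.1
        have ha2 := hbz.2.2.2
        have hvnn := hbz.2.2.1
        have s2 : u r z * (v r z)^2 ≤ (1+δ)*(v r z)^2 := by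
          nlinarith [sq_nonneg (v r z)]
        have s3 : (1+δ)*(v r z)^2 - (1+δ)*(v r z)*(V₀*Real.exp (-c*r))
            ≤ (1+δ)*V*(v r z - V₀*Real.exp (-c*r)) := by
          nlinarith [mul_nonneg h1δ.le (mul_nonneg hpos'.le (sub_nonneg.2 ha2))]
        have s4 : (1+δ)*(v r z)*(V₀*Real.exp (-c*r)) - (f+κ)*(v r z)
            + c*(V₀*Real.exp (-c*r)) ≤ 0 := by
          nlinarith [mul_nonneg hc.le hpos'.le, hBV₀, hB0, hcc₀, hvnn,
            mul_le_mul_of_nonneg_left hBV₀ h1δ.le,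
            mul_nonneg hvnn (sub_nonneg.2 hBV₀)]
        nlinarith [s2, s3, s4]
    have := hmas T (right_mem_Icc.2 hT)
    filter_upwards [this] with z hz
    linarith
  have hEa : ∀ᵐ z ∂(volume.restrict Ω), ∀ t, 0 ≤ t → v t z ≤ V₀ * Real.exp (-c*t) := by
    apply ae_all_t hΩm (c := fun t => V₀ * Real.exp (-c*t)) hcv
      (continuous_const.mul (Real.continuous_exp.comp (continuous_const.mul continuous_id)))
      instVa
  -- Instance (b) : u ≤ 1 + δ e^{-ft}
  have instB : ∀ T, 0 ≤ T → ∀ᵐ z ∂(volume.restrict Ω), u T z ≤ 1 + δ * Real.exp (-f*T) := by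
    intro T hT
    obtain ⟨U, V, Λu, Λv, hU0, hV0, hΛu0, hΛv0, hbd, hlips⟩ := apriori T hT
    have hΛ0 : (0:ℝ) ≤ Λu + δ*f := by positivity
    have hmas : ∀ t ∈ Icc (0:ℝ) T, ∀ᵐ z ∂(volume.restrict Ω),
        u t z - (1 + δ * Real.exp (-f*t)) ≤ 0 := by
      apply master hγ₁ hγinf0 hd₁.le le_rfl hT hΛ0
        (w := fun t z => u t z - (1 + δ * Real.exp (-f*t)))
        (D := fun t z => (d₁ * GammaOp Ω γ₁ (u t) z - u t z * (v t z)^2 + f*(1 - u t z))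
          - δ * (Real.exp (-f*t) * (-f)))
      · intro t ht0
        exact ((hmemuv t ht0.1).1).sub (memLp_top_const _)
      · intro z hz
        exact ((hcu z hz).mono Icc_subset_Ici_self).sub
          (continuous_const.add (continuous_const.mul (Real.continuous_exp.comp
            (continuous_const.mul continuous_id)))).continuousOn
      · intro z hz r hr
        have hB : HasDerivAt (fun s => 1 + δ * Real.exp (-f*s)) (δ * (Real.exp (-f*r) * (-f))) r := by
          have h1 : HasDerivAt (fun s => δ * Real.exp (-f*s)) (δ * (Real.exp (-f*r) * (-f))) r := by
            simpa using ((((hasDerivAt_id r).const_mul (-f)).exp).const_mul δ)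
          simpa using h1.const_add 1
        exact (((hode z hz r hr.1.le).1).hasDerivAt (Ici_mem_nhds hr.1)).sub hB
      · filter_upwards [ae_le_supN hu0, ae_restrict_mem hΩm] with z h1 h2
        show u 0 z - (1 + δ * Real.exp (-f*0)) ≤ 0
        rw [(hinit0 z h2).1]
        have h3 : u0 z ≤ supN Ω u0 := le_trans (le_abs_self _) h1
        simp only [mul_zero, neg_zero, Real.exp_zero, mul_one]
        linarith
      · intro s hs t ht2
        filter_upwards [hlips] with z hz
        have h1 := (hz s hs t ht2).1
        have h2 := exp_lip hf.le hs.1 ht2.1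
        show |(u t z - (1 + δ*Real.exp (-f*t))) - (u s z - (1 + δ*Real.exp (-f*s)))|
            ≤ (Λu + δ*f)*|t-s|
        have h3 : (u t z - (1 + δ*Real.exp (-f*t))) - (u s z - (1 + δ*Real.exp (-f*s)))
            = (u t z - u s z) - δ*(Real.exp (-f*t) - Real.exp (-f*s)) := by ring
        rw [h3]
        calc |(u t z - u s z) - δ*(Real.exp (-f*t) - Real.exp (-f*s))|
            ≤ |u t z - u s z| + |δ*(Real.exp (-f*t) - Real.exp (-f*s))| := abs_sub _ _
          _ ≤ Λu*|t-s| + δ*(f*|t-s|) := by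
              rw [abs_mul, abs_of_nonneg hδ]
              have h4 := mul_le_mul_of_nonneg_left h2 hδ
              linarith
          _ = (Λu + δ*f)*|t-s| := by ring
      · filter_upwards [hbd] with z hz
        obtain ⟨hzΩ, hb⟩ := hz
        refine ⟨hzΩ, fun r hr hpos => ?_⟩
        have hpos' : 0 < u r z - (1 + δ*Real.exp (-f*r)) := hpos
        have hΓeq : GammaOp Ω γ₁ (fun x => u r x - (1 + δ*Real.exp (-f*r))) z
            = GammaOp Ω γ₁ (u r) z := gammaOp_sub_const γ₁ (u r) _ z
        show (d₁ * GammaOp Ω γ₁ (u r) z - u r z * (v r z)^2 + f*(1 - u r z))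
              - δ * (Real.exp (-f*r) * (-f))
            ≤ d₁ * GammaOp Ω γ₁ (fun x => u r x - (1 + δ*Real.exp (-f*r))) z
              + 0 * (u r z - (1 + δ*Real.exp (-f*r)))
        rw [hΓeq]
        have he := Real.exp_pos (-f*r)
        have hu0' : (0:ℝ) ≤ u r z := by nlinarith
        nlinarith [mul_nonneg hu0' (sq_nonneg (v r z)), hf.le, hδ]
    have := hmas T (right_mem_Icc.2 hT)
    filter_upwards [this] with z hz
    linarith
  -- Instance (c) : lower barrier 1 - η t ≤ u
  have hA0 : (0:ℝ) ≤ (1+δ)*V₀^2 := by positivity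
  have hf2c : 0 < f - 2*c := by linarith
  set KK := ((1+δ)*V₀^2)/(f-2*c) with hKKdef
  have hKK0 : 0 ≤ KK := div_nonneg hA0 hf2c.le
  have hKeq : KK*(f-2*c) = (1+δ)*V₀^2 := by
    rw [hKKdef]; field_simp
  set η : ℝ → ℝ := fun t => Real.exp (-f*t) + KK*(Real.exp (-(2*c)*t) - Real.exp (-f*t))
    with hηdef
  have hηd : ∀ r, HasDerivAt η
      ((-f)*Real.exp (-f*r) + KK*((-(2*c))*Real.exp (-(2*c)*r) - (-f)*Real.exp (-f*r))) r := by
    intro r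
    have h1 : HasDerivAt (fun t => Real.exp (-f*t)) ((-f)*Real.exp (-f*r)) r := by
      simpa [mul_comm] using ((hasDerivAt_id r).const_mul (-f)).exp
    have h2 : HasDerivAt (fun t => Real.exp (-(2*c)*t)) ((-(2*c))*Real.exp (-(2*c)*r)) r := by
      simpa [mul_comm] using ((hasDerivAt_id r).const_mul (-(2*c))).exp
    exact h1.add ((h2.sub h1).const_mul KK)
  have hηcont : Continuous η := by
    have he1 : Continuous (fun t : ℝ => Real.exp (-f*t)) :=
      Real.continuous_exp.comp (continuous_const.mul continuous_id)
    have he2 : Continuous (fun t : ℝ => Real.exp (-(2*c)*t)) :=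
      Real.continuous_exp.comp (continuous_const.mul continuous_id)
    exact he1.add (continuous_const.mul (he2.sub he1))
  have hηid : ∀ t, ((-f)*Real.exp (-f*t) + KK*((-(2*c))*Real.exp (-(2*c)*t)
      - (-f)*Real.exp (-f*t))) + f * η t = ((1+δ)*V₀^2) * Real.exp (-(2*c)*t) := by
    intro t
    show ((-f)*Real.exp (-f*t) + KK*((-(2*c))*Real.exp (-(2*c)*t) - (-f)*Real.exp (-f*t)))
      + f * (Real.exp (-f*t) + KK*(Real.exp (-(2*c)*t) - Real.exp (-f*t)))
      = ((1+δ)*V₀^2) * Real.exp (-(2*c)*t)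
    linear_combination Real.exp (-(2*c)*t) * hKeq
  have hηnn : ∀ t, 0 ≤ t → 0 ≤ η t := by
    intro t ht
    have h1 : Real.exp (-f*t) ≤ Real.exp (-(2*c)*t) := by
      apply Real.exp_le_exp.2
      nlinarith
    show 0 ≤ Real.exp (-f*t) + KK*(Real.exp (-(2*c)*t) - Real.exp (-f*t))
    nlinarith [Real.exp_pos (-f*t), hKK0]
  have hη0 : η 0 = 1 := by
    show Real.exp (-f*0) + KK*(Real.exp (-(2*c)*0) - Real.exp (-f*0)) = 1
    simp
  have instC : ∀ T, 0 ≤ T → ∀ᵐ z ∂(volume.restrict Ω), 1 - η T ≤ u T z := by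
    intro T hT
    obtain ⟨U, V, Λu, Λv, hU0, hV0, hΛu0, hΛv0, hbd, hlips⟩ := apriori T hT
    have hΛ0 : (0:ℝ) ≤ Λu + (f + KK*(2*c + f)) := by positivity
    have hmas : ∀ t ∈ Icc (0:ℝ) T, ∀ᵐ z ∂(volume.restrict Ω), (1 - η t) - u t z ≤ 0 := by
      apply master hγ₁ hγinf0 hd₁.le le_rfl hT hΛ0
        (w := fun t z => (1 - η t) - u t z)
        (D := fun t z => -((-f)*Real.exp (-f*t) + KK*((-(2*c))*Real.exp (-(2*c)*t)
            - (-f)*Real.exp (-f*t)))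
          - (d₁ * GammaOp Ω γ₁ (u t) z - u t z * (v t z)^2 + f*(1 - u t z)))
      · intro t ht0
        exact (memLp_top_const _).sub ((hmemuv t ht0.1).1)
      · intro z hz
        exact ((continuous_const.sub hηcont).continuousOn).sub
          ((hcu z hz).mono Icc_subset_Ici_self)
      · intro z hz r hr
        exact ((hηd r).const_sub 1).sub (((hode z hz r hr.1.le).1).hasDerivAt (Ici_mem_nhds hr.1))
      · filter_upwards [hu0pos, ae_restrict_mem hΩm] with z h1 h2
        show (1 - η 0) - u 0 z ≤ 0
        rw [hη0, (hinit0 z h2).1]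
        linarith
      · intro s hs t ht2
        filter_upwards [hlips] with z hz
        have h1 := (hz s hs t ht2).1
        have h2 := exp_lip hf.le hs.1 ht2.1
        have h2' := exp_lip (by linarith : (0:ℝ) ≤ 2*c) hs.1 ht2.1
        show |((1 - η t) - u t z) - ((1 - η s) - u s z)| ≤ (Λu + (f + KK*(2*c + f)))*|t-s|
        have h3 : ((1 - η t) - u t z) - ((1 - η s) - u s z)
            = -(u t z - u s z) - (η t - η s) := by ring
        have h4 : |η t - η s| ≤ (f + KK*(2*c + f))*|t-s| := by
          show |(Real.exp (-f*t) + KK*(Real.exp (-(2*c)*t) - Real.exp (-f*t)))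
            - (Real.exp (-f*s) + KK*(Real.exp (-(2*c)*s) - Real.exp (-f*s)))| ≤ _
          have h5 : (Real.exp (-f*t) + KK*(Real.exp (-(2*c)*t) - Real.exp (-f*t)))
              - (Real.exp (-f*s) + KK*(Real.exp (-(2*c)*s) - Real.exp (-f*s)))
              = (Real.exp (-f*t) - Real.exp (-f*s))
                + KK*((Real.exp (-(2*c)*t) - Real.exp (-(2*c)*s))
                  - (Real.exp (-f*t) - Real.exp (-f*s))) := by ring
          rw [h5]
          have h6 : |KK*((Real.exp (-(2*c)*t) - Real.exp (-(2*c)*s))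
              - (Real.exp (-f*t) - Real.exp (-f*s)))| ≤ KK*(2*c*|t-s| + f*|t-s|) := by
            rw [abs_mul, abs_of_nonneg hKK0]
            apply mul_le_mul_of_nonneg_left _ hKK0
            calc |(Real.exp (-(2*c)*t) - Real.exp (-(2*c)*s))
                - (Real.exp (-f*t) - Real.exp (-f*s))|
                ≤ |Real.exp (-(2*c)*t) - Real.exp (-(2*c)*s)|
                  + |Real.exp (-f*t) - Real.exp (-f*s)| := abs_sub _ _
              _ ≤ 2*c*|t-s| + f*|t-s| := add_le_add h2' h2
          calc |(Real.exp (-f*t) - Real.exp (-f*s))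
              + KK*((Real.exp (-(2*c)*t) - Real.exp (-(2*c)*s))
                - (Real.exp (-f*t) - Real.exp (-f*s)))|
              ≤ |Real.exp (-f*t) - Real.exp (-f*s)|
                + |KK*((Real.exp (-(2*c)*t) - Real.exp (-(2*c)*s))
                  - (Real.exp (-f*t) - Real.exp (-f*s)))| := abs_add_le _ _
            _ ≤ f*|t-s| + KK*(2*c*|t-s| + f*|t-s|) := add_le_add h2 h6
            _ = (f + KK*(2*c + f))*|t-s| := by ring
        rw [h3]
        calc |-(u t z - u s z) - (η t - η s)|
            ≤ |-(u t z - u s z)| + |η t - η s| := abs_sub _ _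
          _ = |u t z - u s z| + |η t - η s| := by rw [abs_neg]
          _ ≤ Λu*|t-s| + (f + KK*(2*c + f))*|t-s| := add_le_add h1 h4
          _ = (Λu + (f + KK*(2*c + f)))*|t-s| := by ring
      · filter_upwards [hbd, hEA, hEa] with z hz hu1 hv1
        obtain ⟨hzΩ, hb⟩ := hz
        refine ⟨hzΩ, fun r hr hpos => ?_⟩
        have hr0 : (0:ℝ) ≤ r := hr.1.le
        have hrI : r ∈ Icc (0:ℝ) T := ⟨hr0, hr.2.le⟩
        have hbz := hb r hrI
        have hpos' : 0 < (1 - η r) - u r z := hpos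
        have hΓeq : GammaOp Ω γ₁ (fun x => (1 - η r) - u r x) z = -GammaOp Ω γ₁ (u r) z :=
          gammaOp_const_sub γ₁ (u r) _ z
        show -((-f)*Real.exp (-f*r) + KK*((-(2*c))*Real.exp (-(2*c)*r)
              - (-f)*Real.exp (-f*r)))
            - (d₁ * GammaOp Ω γ₁ (u r) z - u r z * (v r z)^2 + f*(1 - u r z))
            ≤ d₁ * GammaOp Ω γ₁ (fun x => (1 - η r) - u r x) z + 0 * ((1 - η r) - u r z)
        rw [hΓeq]
        have ha4 := hu1 r hr0
        have ha3 := hbz.1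
        have hvnn := hbz.2.2.1
        have hvd := hv1 r hr0
        have e2 : (Real.exp (-c*r))^2 = Real.exp (-(2*c)*r) := by
          rw [sq, ← Real.exp_add]
          congr 1
          ring
        have s1 : (v r z)^2 ≤ V₀^2 * Real.exp (-(2*c)*r) := by
          have h7 : (v r z)^2 ≤ (V₀*Real.exp (-c*r))^2 := by nlinarith
          calc (v r z)^2 ≤ (V₀*Real.exp (-c*r))^2 := h7
            _ = V₀^2 * (Real.exp (-c*r))^2 := by ring
            _ = V₀^2 * Real.exp (-(2*c)*r) := by rw [e2]
        have s2 : u r z * (v r z)^2 ≤ ((1+δ)*V₀^2) * Real.exp (-(2*c)*r) := by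
          nlinarith [sq_nonneg (v r z), mul_nonneg (mul_nonneg (sq_nonneg V₀)
            (Real.exp_pos (-(2*c)*r)).le) hδ]
        have s4 : f * η r ≤ f * (1 - u r z) :=
          mul_le_mul_of_nonneg_left (by linarith) hf.le
        have s5 := hηid r
        nlinarith [s2, s4, s5]
    have := hmas T (right_mem_Icc.2 hT)
    filter_upwards [this] with z hz
    linarith
  -- Conclusions
  constructor
  · intro t ht
    constructor
    · apply supN_le_of_ae h1δ.le
      filter_upwards [hupos t ht, instA t ht] with z h1 h2
      rw [abs_le]
      exact ⟨by linarith, h2⟩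
    · apply supN_le_of_ae hV₀
      filter_upwards [hvpos t ht, instVa t ht] with z h1 h2
      have h3 : Real.exp (-c*t) ≤ 1 := by
        rw [Real.exp_le_one_iff]
        nlinarith [hc.le]
      rw [abs_le]
      refine ⟨by linarith, ?_⟩
      nlinarith
  · have hub : ∀ t, 0 ≤ t → supN Ω (fun y => u t y - 1) + supN Ω (v t)
        ≤ (δ*Real.exp (-f*t) + η t) + V₀*Real.exp (-c*t) := by
      intro t ht
      have h1 : supN Ω (fun y => u t y - 1) ≤ δ*Real.exp (-f*t) + η t := by
        apply supN_le_of_ae (add_nonneg (by positivity) (hηnn t ht))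
        filter_upwards [instB t ht, instC t ht] with z h2 h3
        rw [abs_le]
        constructor
        · have h4 : 0 ≤ δ*Real.exp (-f*t) := by positivity
          linarith
        · have h5 := hηnn t ht
          linarith
      have h2 : supN Ω (v t) ≤ V₀*Real.exp (-c*t) := by
        apply supN_le_of_ae (by positivity)
        filter_upwards [hvpos t ht, instVa t ht] with z h3 h4
        rw [abs_le]
        refine ⟨?_, h4⟩
        have h5 : (0:ℝ) ≤ V₀*Real.exp (-c*t) := by positivity
        linarith
      linarith
    have hexp0 : ∀ a : ℝ, 0 < a → Tendsto (fun t : ℝ => Real.exp (-a*t)) atTop (𝓝 0) := by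
      intro a ha
      have h1 : Tendsto (fun t : ℝ => a*t) atTop atTop :=
        Tendsto.const_mul_atTop ha tendsto_id
      have h2 := Real.tendsto_exp_neg_atTop_nhds_zero.comp h1
      have h3 : (fun t : ℝ => Real.exp (-(a*t))) = fun t : ℝ => Real.exp (-a*t) := by
        funext t; ring_nf
      rw [← h3]
      exact h2
    have hηlim : Tendsto η atTop (𝓝 0) := by
      have h1 := hexp0 f hf
      have h2 := hexp0 (2*c) (by linarith)
      have h3 : Tendsto (fun t => Real.exp (-f*t)
          + KK*(Real.exp (-(2*c)*t) - Real.exp (-f*t))) atTop (𝓝 (0 + KK*(0 - 0))) :=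
        h1.add (Tendsto.const_mul KK (h2.sub h1))
      have h4 : (0:ℝ) + KK*(0-0) = 0 := by ring
      rw [h4] at h3
      exact h3
    have hblim : Tendsto (fun t => (δ*Real.exp (-f*t) + η t) + V₀*Real.exp (-c*t))
        atTop (𝓝 ((δ*0 + 0) + V₀*0)) :=
      ((Tendsto.const_mul δ (hexp0 f hf)).add hηlim).add
        (Tendsto.const_mul V₀ (hexp0 c hc))
    have hblim' : Tendsto (fun t => (δ*Real.exp (-f*t) + η t) + V₀*Real.exp (-c*t))
        atTop (𝓝 0) := by simpa using hblim
    apply squeeze_zero'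
      (f := fun t => supN Ω (fun y => u t y - 1) + supN Ω (v t))
    · filter_upwards [eventually_ge_atTop (0:ℝ)] with t ht
      exact add_nonneg (supN_nonneg _) (supN_nonneg _)
    · filter_upwards [eventually_ge_atTop (0:ℝ)] with t ht
      exact hub t ht
    · exact hblim'


end
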